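/- Let k+1 and p > k(k+1) be odd primes. Let u = (u_1,...,u_k) be a tuple of positive integers with u_i ≡ i (mod p) for all i, and suppose k+1 does not divide gcd(u_1,...,u_k). Then there exists a rational t with denominator dividing (k+1)p such that ‖t·u_i‖ ≥ 1/(k+1) for all i, where ‖x‖ is the distance from x to the nearest integer. -/
import Mathlib

/-- Distance from a real number to the nearest integer. -/
noncomputable def distNearestInt (x : ℝ) : ℝ := |x - round x|

open Finset

section helpers

/-- product over a function hitting exactly the nonzero residues -/
lemma prod_eq_of_image_eq {q k : ℕ} [NeZero q] (hqk : q = k + 1) (f : Fin k → ZMod (k + 1))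
    (himg : image f univ = univ.erase (0 : ZMod (k + 1))) :
    ∏ j, f j = ∏ x ∈ univ.erase (0 : ZMod (k + 1)), x := by
  have hcard : (image f univ).card = (univ : Finset (Fin k)).card := by
    rw [himg, card_erase_of_mem (mem_univ _)]
    simp [card_univ, ZMod.card, hqk]
  have hinj : ∀ x ∈ (univ : Finset (Fin k)), ∀ y ∈ univ, f x = f y → x = y := by
    have := Finset.injOn_of_card_image_eq hcard
    intro x hx y hy hxy
    exact this (by simp) (by simp) hxy
  rw [← himg, prod_image hinj]

lemma key_exists {k : ℕ} [hq : Fact (Nat.Prime (k + 1))]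
    (v : Fin k → ZMod (k + 1)) (jz : Fin k) (hjz : v jz = 0) (j0 : Fin k) (hj0 : v j0 ≠ 0) :
    ∃ a s : ZMod (k + 1), ∀ j : Fin k,
      a * v j - s * (((j : ℕ) + 1 : ℕ) : ZMod (k + 1)) ≠ 0 ∧
      a * v j - s * (((j : ℕ) + 1 : ℕ) : ZMod (k + 1)) ≠ 1 := by
  set E : Fin k → ZMod (k + 1) := fun j => (((j : ℕ) + 1 : ℕ) : ZMod (k + 1)) with hE
  by_contra hbad
  push_neg at hbad
  have hbad' : ∀ a s : ZMod (k + 1), ∃ j : Fin k, a * v j - s * E j = 0 ∨ a * v j - s * E j = 1 := by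
    intro a s
    obtain ⟨j, hj⟩ := hbad a s
    rcases eq_or_ne (a * v j - s * E j) 0 with h0 | h0
    · exact ⟨j, Or.inl h0⟩
    · exact ⟨j, Or.inr (hj h0)⟩
  clear hbad
  -- facts about E
  have hEval : ∀ j : Fin k, (E j).val = (j : ℕ) + 1 := by
    intro j
    exact ZMod.val_cast_of_lt (by have := j.isLt; omega)
  have hE0 : ∀ j, E j ≠ 0 := by
    intro j h
    have := hEval j
    rw [h] at this
    simp [ZMod.val_zero] at this
  have hEinj : Function.Injective E := by
    intro i j hij
    have : (E i).val = (E j).val := by rw [hij]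
    rw [hEval, hEval] at this
    exact Fin.ext (by omega)
  have hEimg : image E univ = univ.erase (0 : ZMod (k + 1)) := by
    apply eq_of_subset_of_card_le
    · intro x hx
      obtain ⟨j, _, rfl⟩ := mem_image.mp hx
      exact mem_erase.mpr ⟨hE0 j, mem_univ _⟩
    · rw [card_erase_of_mem (mem_univ _), card_image_of_injective _ hEinj]
      simp [card_univ, ZMod.card]
  have hEprod : ∏ j, E j = ∏ x ∈ univ.erase (0 : ZMod (k + 1)), x :=
    prod_eq_of_image_eq rfl E hEimg
  have hPne : (∏ j, E j) ≠ 0 := prod_ne_zero_iff.mpr (fun j _ => hE0 j)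
  -- Claim B
  have hBval : ∀ b : ZMod (k + 1), (∏ j, (b * v j - E j)) ≠ 0 →
      (∏ j, (b * v j - E j)) = ∏ j, E j := by
    intro b hb
    set w : Fin k → ZMod (k + 1) := fun j => b * v j - E j with hw
    have hw0 : ∀ j, w j ≠ 0 := fun j => prod_ne_zero_iff.mp hb j (mem_univ j)
    have hsurj : ∀ y : ZMod (k + 1), y ≠ 0 → ∃ j, w j = y := by
      intro y hy
      obtain ⟨j, hj⟩ := hbad' (y⁻¹ * b) y⁻¹
      have heq : (y⁻¹ * b) * v j - y⁻¹ * E j = y⁻¹ * w j := by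
        simp only [hw]; ring
      rw [heq] at hj
      rcases hj with h | h
      · exact absurd (mul_eq_zero.mp h)
          (by push_neg; exact ⟨inv_ne_zero hy, hw0 j⟩)
      · refine ⟨j, ?_⟩
        have : y * (y⁻¹ * w j) = y * 1 := by rw [h]
        rwa [← mul_assoc, mul_inv_cancel₀ hy, one_mul, mul_one] at this
    have himgw : image w univ = univ.erase (0 : ZMod (k + 1)) := by
      apply Subset.antisymm
      · intro x hx
        obtain ⟨j, _, rfl⟩ := mem_image.mp hx
        exact mem_erase.mpr ⟨hw0 j, mem_univ _⟩
      · intro x hx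
        obtain ⟨j, hj⟩ := hsurj x (mem_erase.mp hx).1
        exact mem_image.mpr ⟨j, mem_univ _, hj⟩
    rw [prod_eq_of_image_eq rfl w himgw, hEprod]
  -- sum over b vanishes
  have hsum : ∑ b : ZMod (k + 1), ∏ j, (b * v j - E j) = 0 := by
    have step1 : ∀ b : ZMod (k + 1), ∏ j, (b * v j - E j)
        = ∑ t ∈ (univ : Finset (Fin k)).powerset,
            b ^ t.card * ((∏ j ∈ t, v j) * ∏ j ∈ univ \ t, (-E j)) := by
      intro b
      have : ∏ j, (b * v j - E j) = ∏ j, (b * v j + (-E j)) := by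
        apply prod_congr rfl; intro j _; ring
      rw [this, prod_add]
      refine sum_congr rfl fun t _ => ?_
      rw [prod_mul_distrib, prod_const]
      ring
    calc ∑ b : ZMod (k + 1), ∏ j, (b * v j - E j)
        = ∑ b : ZMod (k + 1), ∑ t ∈ (univ : Finset (Fin k)).powerset,
            b ^ t.card * ((∏ j ∈ t, v j) * ∏ j ∈ univ \ t, (-E j)) :=
          sum_congr rfl fun b _ => step1 b
      _ = ∑ t ∈ (univ : Finset (Fin k)).powerset,
            ∑ b : ZMod (k + 1), b ^ t.card * ((∏ j ∈ t, v j) * ∏ j ∈ univ \ t, (-E j)) :=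
          sum_comm
      _ = 0 := by
          apply sum_eq_zero
          intro t _
          by_cases htu : t = univ
          · subst htu
            have h0 : (∏ j ∈ (univ : Finset (Fin k)), v j) = 0 :=
              prod_eq_zero (mem_univ jz) hjz
            simp [h0]
          · have hle : t.card ≤ k := by
              have := card_le_card (subset_univ t)
              simpa [card_univ] using this
            have hlt : t.card < k := by
              rcases hle.lt_or_eq with h | h
              · exact h
              · exfalso
                apply htu
                apply eq_of_subset_of_card_le (subset_univ t)
                simp [card_univ, h]
            rw [← sum_mul]
            have hz : ∑ b : ZMod (k + 1), b ^ t.card = 0 := by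
              apply FiniteField.sum_pow_lt_card_sub_one
              rw [ZMod.card]
              omega
            rw [hz, zero_mul]
  -- counting
  set R := univ.filter (fun b : ZMod (k + 1) => (∏ j, (b * v j - E j)) ≠ 0) with hR
  have hsum2 : ∑ b : ZMod (k + 1), ∏ j, (b * v j - E j) = (R.card : ZMod (k + 1)) * ∏ j, E j := by
    rw [← sum_filter_add_sum_filter_not univ
      (fun b : ZMod (k + 1) => (∏ j, (b * v j - E j)) ≠ 0)]
    have h2 : ∑ b ∈ univ.filter (fun b : ZMod (k + 1) => ¬ (∏ j, (b * v j - E j)) ≠ 0),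
        ∏ j, (b * v j - E j) = 0 := by
      apply sum_eq_zero
      intro b hb
      exact not_not.mp (mem_filter.mp hb).2
    have h1 : ∑ b ∈ R, ∏ j, (b * v j - E j) = ∑ b ∈ R, ∏ j, E j := by
      apply sum_congr rfl
      intro b hb
      exact hBval b (mem_filter.mp hb).2
    rw [h2, add_zero, h1, sum_const, nsmul_eq_mul]
  have hcard0 : (R.card : ZMod (k + 1)) = 0 := by
    rw [hsum] at hsum2
    rcases mul_eq_zero.mp hsum2.symm with h | h
    · exact h
    · exact absurd h hPne
  have hdvd : (k + 1) ∣ R.card := (ZMod.natCast_eq_zero_iff _ _).mp hcard0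
  have h0R : (0 : ZMod (k + 1)) ∈ R := by
    rw [hR, mem_filter]
    refine ⟨mem_univ _, ?_⟩
    apply prod_ne_zero_iff.mpr
    intro j _
    simpa using hE0 j
  have hbstar : (E j0 * (v j0)⁻¹) ∉ R := by
    rw [hR, mem_filter]
    push_neg
    intro _
    apply prod_eq_zero (mem_univ j0)
    rw [mul_assoc, inv_mul_cancel₀ hj0, mul_one, sub_self]
  have hsub : R ⊆ univ.erase (E j0 * (v j0)⁻¹) := by
    intro b hb
    refine mem_erase.mpr ⟨?_, mem_univ _⟩
    intro h
    exact hbstar (h ▸ hb)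
  have hle : R.card ≤ (k + 1) - 1 := by
    have := card_le_card hsub
    rwa [card_erase_of_mem (mem_univ _), card_univ, ZMod.card] at this
  have hpos : 0 < R.card := card_pos.mpr ⟨0, h0R⟩
  have := Nat.le_of_dvd hpos hdvd
  omega

lemma final_bound {k p : ℕ} (hp : 0 < p) (w u : ℕ)
    (h1 : p ≤ (w * u) % ((k + 1) * p)) (h2 : (w * u) % ((k + 1) * p) ≤ k * p) :
    distNearestInt (((((w : ℚ) / (((k + 1) * p : ℕ) : ℚ) : ℚ)) : ℝ) * (u : ℝ)) ≥ 1 / ((k : ℝ) + 1) := by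
  set M := (k + 1) * p with hM
  have hM0 : 0 < M := Nat.mul_pos (by omega) hp
  set X := (w * u) % M with hX
  set D := (w * u) / M with hD
  have hsplit : M * D + X = w * u := Nat.div_add_mod (w * u) M
  have hMr : (0 : ℝ) < (M : ℝ) := by exact_mod_cast hM0
  have hMQ : ((M : ℕ) : ℚ) ≠ 0 := by exact_mod_cast hM0.ne'
  have hval : ((((w : ℚ) / ((M : ℕ) : ℚ) : ℚ)) : ℝ) * (u : ℝ) = (D : ℝ) + (X : ℝ) / (M : ℝ) := by
    have hs : ((M : ℝ) * (D : ℝ) + (X : ℝ)) = (w : ℝ) * (u : ℝ) := by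
      exact_mod_cast congrArg (fun n : ℕ => (n : ℝ)) hsplit
    push_cast
    field_simp
    linarith
  rw [hval]
  simp only [distNearestInt, ge_iff_le]
  have habs : (D : ℝ) + (X : ℝ) / (M : ℝ) - (round ((D : ℝ) + (X : ℝ) / (M : ℝ)) : ℤ)
      = (X : ℝ) / (M : ℝ) - ((round ((D : ℝ) + (X : ℝ) / (M : ℝ)) - (D : ℤ) : ℤ) : ℝ) := by
    push_cast
    ring
  rw [habs]
  set m : ℤ := round ((D : ℝ) + (X : ℝ) / (M : ℝ)) - (D : ℤ) with hm
  have hk1 : (0 : ℝ) < (k : ℝ) + 1 := by positivity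
  have hMeq : (M : ℝ) = ((k : ℝ) + 1) * (p : ℝ) := by rw [hM]; push_cast; ring
  have hy1 : 1 / ((k : ℝ) + 1) ≤ (X : ℝ) / (M : ℝ) := by
    rw [div_le_div_iff₀ hk1 hMr]
    have h1' : (p : ℝ) ≤ (X : ℝ) := by exact_mod_cast h1
    nlinarith
  have hy2 : (X : ℝ) / (M : ℝ) ≤ 1 - 1 / ((k : ℝ) + 1) := by
    have h2' : (X : ℝ) ≤ (k : ℝ) * (p : ℝ) := by exact_mod_cast h2
    rw [div_le_iff₀ hMr]
    have hcalc : (1 - 1 / ((k : ℝ) + 1)) * (M : ℝ) = (k : ℝ) * (p : ℝ) := by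
      rw [hMeq]
      field_simp
      ring
    linarith
  rcases le_or_gt m 0 with hmle | hmgt
  · have hm' : (m : ℝ) ≤ 0 := by exact_mod_cast hmle
    have : 1 / ((k : ℝ) + 1) ≤ (X : ℝ) / (M : ℝ) - (m : ℝ) := by linarith
    exact this.trans (le_abs_self _)
  · have hm' : (1 : ℝ) ≤ (m : ℝ) := by exact_mod_cast hmgt
    have : 1 / ((k : ℝ) + 1) ≤ -((X : ℝ) / (M : ℝ) - (m : ℝ)) := by linarith
    exact this.trans (neg_le_abs _)

end helpers

theorem stmt_8 (k p : ℕ) (hp : Nat.Prime (k + 1)) (hodd : Odd (k + 1))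
    (hpp : Nat.Prime p) (hpodd : Odd p) (hplarge : p > k * (k + 1))
    (u : Fin k → ℕ) (hupos : ∀ i, 0 < u i)
    (hcong : ∀ i : Fin k, u i ≡ (i : ℕ) + 1 [MOD p])
    (hgcd : ¬ ((k + 1) ∣ Finset.univ.gcd u)) :
    ∃ t : ℚ, (t.den : ℕ) ∣ (k + 1) * p ∧
      ∀ i : Fin k, distNearestInt ((t : ℝ) * (u i : ℝ)) ≥ 1 / ((k : ℝ) + 1) := by
  haveI fq : Fact (Nat.Prime (k + 1)) := ⟨hp⟩
  haveI fp : Fact (Nat.Prime p) := ⟨hpp⟩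
  have hk2 : 2 ≤ k := by
    by_contra h
    push_neg at h
    interval_cases k
    · exact Nat.not_prime_one hp
    · rw [Nat.odd_iff] at hodd
      simp at hodd
  have hppos : 0 < p := hpp.pos
  have hqltp : k + 1 < p := by nlinarith
  have hcop : Nat.Coprime (k + 1) p := (Nat.coprime_primes hp hpp).mpr (by omega)
  suffices h : ∃ w : ℕ, ∀ i : Fin k,
      p ≤ (w * u i) % ((k + 1) * p) ∧ (w * u i) % ((k + 1) * p) ≤ k * p by
    obtain ⟨w, hw⟩ := h
    refine ⟨((w : ℚ) / ((((k + 1) * p : ℕ)) : ℚ) : ℚ), ?_, ?_⟩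
    · have hdd := Rat.den_dvd (w : ℤ) (((k + 1) * p : ℕ) : ℤ)
      rw [Rat.divInt_eq_div] at hdd
      push_cast at hdd
      exact_mod_cast hdd
    · intro i
      exact final_bound hppos w (u i) (hw i).1 (hw i).2
  -- construct w
  by_cases hall : ∀ j : Fin k, (u j : ZMod (k + 1)) ≠ 0
  · -- all nonzero: w = p
    refine ⟨p, fun i => ?_⟩
    have hmod : (p * u i) % ((k + 1) * p) = p * (u i % (k + 1)) := by
      rw [mul_comm (k + 1) p, Nat.mul_mod_mul_left]
    have hne : u i % (k + 1) ≠ 0 := by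
      intro h
      exact hall i ((ZMod.natCast_eq_zero_iff _ _).mpr
        (Nat.dvd_iff_mod_eq_zero.mpr h))
    have hlt : u i % (k + 1) < k + 1 := Nat.mod_lt _ (by omega)
    constructor
    · rw [hmod]
      calc p = p * 1 := (mul_one p).symm
        _ ≤ p * (u i % (k + 1)) := Nat.mul_le_mul_left p (by omega)
    · rw [hmod]
      calc p * (u i % (k + 1)) ≤ p * k := Nat.mul_le_mul_left p (by omega)
        _ = k * p := mul_comm p k
  · -- some zero
    push_neg at hall
    obtain ⟨jz, hjz⟩ := hall
    have hn : ∃ j : Fin k, (u j : ZMod (k + 1)) ≠ 0 := by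
      by_contra hno
      push_neg at hno
      apply hgcd
      apply Finset.dvd_gcd
      intro i _
      exact (ZMod.natCast_eq_zero_iff _ _).mp (hno i)
    obtain ⟨j0, hj0⟩ := hn
    obtain ⟨a, s, hs⟩ := key_exists (fun j => (u j : ZMod (k + 1))) jz hjz j0 hj0
    set c : ZMod (k + 1) := -(p : ZMod (k + 1)) with hc
    have hcne : c ≠ 0 := by
      rw [hc, neg_ne_zero, Ne, ZMod.natCast_eq_zero_iff]
      intro hdvd
      rcases (Nat.Prime.eq_one_or_self_of_dvd hpp (k + 1) hdvd) with h1 | h1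
      · omega
      · omega
    set S : ZMod (k + 1) := c * s with hS
    set A : ZMod (k + 1) := c * a with hA
    set hnat : ℕ := if S = 0 then (k + 1) else S.val with hh
    have hhcast : (hnat : ZMod (k + 1)) = S := by
      rw [hh]
      split_ifs with h0
      · rw [h0, ZMod.natCast_self]
      · exact ZMod.natCast_rightInverse S
    have hh1 : 1 ≤ hnat := by
      rw [hh]
      split_ifs with h0
      · omega
      · have hv : S.val ≠ 0 := fun hv => h0 ((ZMod.val_eq_zero S).mp hv)
        omega
    have hh2 : hnat ≤ k + 1 := by
      rw [hh]
      split_ifs with h0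
      · exact le_refl (k + 1)
      · have := ZMod.val_lt S
        omega
    obtain ⟨w, hwq, hwp⟩ := Nat.chineseRemainder hcop A.val hnat
    refine ⟨w, fun i => ?_⟩
    set X := (w * u i) % ((k + 1) * p) with hX
    have hXmod : X ≡ w * u i [MOD (k + 1) * p] := Nat.mod_modEq _ _
    have hdq : (k + 1) ∣ (k + 1) * p := ⟨p, rfl⟩
    have hdp : p ∣ (k + 1) * p := ⟨k + 1, mul_comm _ _⟩
    set mj : ℕ := hnat * ((i : ℕ) + 1) with hmj
    have hilt : (i : ℕ) < k := i.isLt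
    have hmjlt : mj < p := by
      have h1 : mj ≤ (k + 1) * k := Nat.mul_le_mul hh2 (by omega)
      have h2 : (k + 1) * k = k * (k + 1) := mul_comm _ _
      exact lt_of_le_of_lt (h2 ▸ h1) hplarge
    have hXp : X % p = mj := by
      have h1 : X ≡ w * u i [MOD p] := hXmod.of_dvd hdp
      have h2 : w * u i ≡ hnat * ((i : ℕ) + 1) [MOD p] := Nat.ModEq.mul hwp (hcong i)
      have h3 : X ≡ mj [MOD p] := h1.trans h2
      rw [Nat.ModEq] at h3
      rw [h3, Nat.mod_eq_of_lt hmjlt]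
    have hmj1 : 1 ≤ mj := by
      have : 0 < hnat * ((i : ℕ) + 1) := Nat.mul_pos (by omega) (Nat.succ_pos _)
      omega
    set Sj := X / p with hSj
    have hXsplit : X = p * Sj + mj := by
      conv_lhs => rw [← Nat.div_add_mod X p]
      rw [hXp]
    have hXltM : X < (k + 1) * p := Nat.mod_lt _ (by positivity)
    have hSjlt : Sj < k + 1 := by
      rw [hSj, Nat.div_lt_iff_lt_mul hppos]
      exact hXltM
    have hXq : (X : ZMod (k + 1)) = A * (u i : ZMod (k + 1)) := by
      have h1 : X ≡ w * u i [MOD k + 1] := hXmod.of_dvd hdq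
      have h2 : ((X : ℕ) : ZMod (k + 1)) = ((w * u i : ℕ) : ZMod (k + 1)) :=
        (ZMod.natCast_eq_natCast_iff _ _ _).mpr h1
      rw [h2]
      push_cast
      congr 1
      have h3 : ((w : ℕ) : ZMod (k + 1)) = ((A.val : ℕ) : ZMod (k + 1)) :=
        (ZMod.natCast_eq_natCast_iff _ _ _).mpr hwq
      rw [h3]
      exact ZMod.natCast_rightInverse A
    have hSj0 : Sj ≠ 0 := by
      intro h0
      have hXm : X = mj := by rw [hXsplit, h0, Nat.mul_zero, Nat.zero_add]
      have hcast : (X : ZMod (k + 1)) = S * (((i : ℕ) + 1 : ℕ) : ZMod (k + 1)) := by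
        rw [hXm, hmj]
        push_cast [hhcast]
        ring
      rw [hXq] at hcast
      have hcc : c * (a * (u i : ZMod (k + 1))) =
          c * (s * (((i : ℕ) + 1 : ℕ) : ZMod (k + 1))) := by
        rw [hA] at hcast
        rw [hS] at hcast
        linear_combination hcast
      have hfin := mul_left_cancel₀ hcne hcc
      exact (hs i).1 (by rw [sub_eq_zero]; exact hfin)
    have hSjk : Sj ≠ k := by
      intro h0
      have hXm : X = p * k + mj := by rw [hXsplit, h0]
      have hkneg : ((k : ℕ) : ZMod (k + 1)) = -1 := by
        have h1 : (((k + 1 : ℕ)) : ZMod (k + 1)) = 0 := ZMod.natCast_self _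
        push_cast at h1
        linear_combination h1
      have hcast : (X : ZMod (k + 1)) =
          (p : ZMod (k + 1)) * ((k : ℕ) : ZMod (k + 1)) +
            S * (((i : ℕ) + 1 : ℕ) : ZMod (k + 1)) := by
        rw [hXm, hmj]
        push_cast [hhcast]
        ring
      rw [hXq, hkneg] at hcast
      have hcc : c * (a * (u i : ZMod (k + 1))) =
          c * (1 + s * (((i : ℕ) + 1 : ℕ) : ZMod (k + 1))) := by
        rw [hA] at hcast
        rw [hS] at hcast
        rw [hc] at hcast ⊢
        linear_combination hcast
      have hfin := mul_left_cancel₀ hcne hcc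
      apply (hs i).2
      linear_combination hfin
    clear_value Sj
    have hSjge : 1 ≤ Sj := by omega
    have hSjle : Sj ≤ k - 1 := by omega
    constructor
    · calc p = p * 1 := (mul_one p).symm
        _ ≤ p * Sj := Nat.mul_le_mul_left p hSjge
        _ ≤ p * Sj + mj := Nat.le_add_right _ _
        _ = X := hXsplit.symm
    · have hps : p * Sj ≤ p * (k - 1) := Nat.mul_le_mul_left p hSjle
      have hkk : p * (k - 1) + p = p * k := by
        have hone : (k - 1) + 1 = k := by omega
        calc p * (k - 1) + p = p * ((k - 1) + 1) := by ring
          _ = p * k := by rw [hone]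
      have hlast : X < k * p := by
        calc X = p * Sj + mj := hXsplit
          _ ≤ p * (k - 1) + mj := Nat.add_le_add_right hps mj
          _ < p * (k - 1) + p := Nat.add_lt_add_left hmjlt _
          _ = p * k := hkk
          _ = k * p := mul_comm p k
      exact Nat.le_of_lt hlast
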